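/- Let X be a real reflexive Banach space and f : X → ℝ a convex, lower semicontinuous function that is Gâteaux differentiable on all of X, and whose convex conjugate f* is Gâteaux differentiable on all of X*. Then the gradient map ∇f : X → X* is a bijection and (∇f)⁻¹ = ∇f*. -/

import Mathlib

/-- For a convex function, the line derivative is bounded above by the increment. -/
lemma lineDeriv_le_sub_of_convexOn {E : Type*} [NormedAddCommGroup E] [NormedSpace ℝ E]
    {h : E → ℝ} (hc : ConvexOn ℝ Set.univ h) {d : ℝ} {x v : E}
    (hd : HasLineDerivAt ℝ h d x v) : d ≤ h (x + v) - h x := by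
  have hφ : ConvexOn ℝ Set.univ (fun t : ℝ => h (x + t • v)) := by
    refine ⟨convex_univ, ?_⟩
    intro s _ t _ a b ha hb hab
    have e : x + (a • s + b • t) • v = a • (x + s • v) + b • (x + t • v) := by
      match_scalars
      · linarith
      · simp only [smul_eq_mul]; ring
    simp only [e]
    exact hc.2 (Set.mem_univ _) (Set.mem_univ _) ha hb hab
  have hder : HasDerivAt (fun t : ℝ => h (x + t • v)) d 0 := hd
  have := hφ.le_slope_of_hasDerivAt (Set.mem_univ (0:ℝ)) (Set.mem_univ 1) one_pos hder
  rw [slope_def_field] at this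
  simpa using this

/-- If a function has line derivative `d` at `x` in direction `v`, and `c` is a
"subgradient slope" along that line, then `d = c`. -/
lemma lineDeriv_eq_of_subgrad {E : Type*} [NormedAddCommGroup E] [NormedSpace ℝ E]
    {h : E → ℝ} {d c : ℝ} {x v : E} (hd : HasLineDerivAt ℝ h d x v)
    (hsub : ∀ t : ℝ, h x + c * t ≤ h (x + t • v)) : d = c := by
  have hder : HasDerivAt (fun t : ℝ => h (x + t • v)) d 0 := hd
  have hψ : HasDerivAt (fun t : ℝ => h (x + t • v) - (h x + c * t)) (d - c) 0 := by
    exact (hder.sub (((hasDerivAt_id (0:ℝ)).const_mul c).const_add (h x))).congr_deriv (by simp)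
  have hmin : IsLocalMin (fun t : ℝ => h (x + t • v) - (h x + c * t)) 0 := by
    apply Filter.Eventually.of_forall
    intro t
    have h0 := hsub 0
    have ht := hsub t
    simp only [zero_smul, add_zero, mul_zero] at h0 ⊢
    linarith
  have := hmin.hasDerivAt_eq_zero hψ
  linarith

/-- For a fully Legendre function `f` on a real reflexive Banach
space `X` (convex, lower semicontinuous, Gâteaux differentiable on all of `X`,
with conjugate `f*` Gâteaux differentiable on all of `X*`), the gradient map
`∇f : X → X*` is a bijection and `(∇f)⁻¹ = ∇f*` (where `∇f*` is viewed as a map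
`X* → X` via the reflexivity identification `X ≅ X**`). -/
theorem fully_legendre_gradient_bijective_inverse
    {X : Type*} [NormedAddCommGroup X] [NormedSpace ℝ X] [CompleteSpace X]
    (hrefl : Function.Surjective (NormedSpace.inclusionInDoubleDual ℝ X))
    (f : X → ℝ) (hconv : ConvexOn ℝ Set.univ f) (hlsc : LowerSemicontinuous f)
    (g : X → StrongDual ℝ X)
    (hg : ∀ x v, HasLineDerivAt ℝ f (g x v) x v)
    (fstar : StrongDual ℝ X → ℝ)
    (hfstar : ∀ p, IsLUB (Set.range fun x => p x - f x) (fstar p))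
    (gstar : StrongDual ℝ X → X)
    (hgstar : ∀ p q, HasLineDerivAt ℝ fstar (q (gstar p)) p q) :
    Function.Bijective g ∧ (∀ x, gstar (g x) = x) ∧ (∀ p, g (gstar p) = p) := by
  -- Step A : subgradient inequality for f
  have hA : ∀ x y : X, f x + g x (y - x) ≤ f y := by
    intro x y
    have := lineDeriv_le_sub_of_convexOn hconv (hg x (y - x))
    have e : x + (y - x) = y := by abel
    rw [e] at this
    linarith
  -- Fenchel–Young: lower bound for fstar
  have hBge : ∀ (p : StrongDual ℝ X) (x : X), p x - f x ≤ fstar p :=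
    fun p x => (hfstar p).1 ⟨x, rfl⟩
  -- Step B : Fenchel equality at (x, g x)
  have hB : ∀ x : X, fstar (g x) = g x x - f x := by
    intro x
    refine le_antisymm ?_ (hBge _ x)
    apply (hfstar (g x)).2
    rintro _ ⟨y, rfl⟩
    have h1 := hA x y
    rw [map_sub] at h1
    simp only
    linarith
  -- Step C : fstar is convex
  have hC : ConvexOn ℝ Set.univ fstar := by
    refine ⟨convex_univ, ?_⟩
    intro p _ q _ a b ha hb hab
    apply (hfstar _).2
    rintro _ ⟨x, rfl⟩
    have h1 := mul_le_mul_of_nonneg_left (hBge p x) ha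
    have h2 := mul_le_mul_of_nonneg_left (hBge q x) hb
    have e : (a • p + b • q) x = a * p x + b * q x := by
      simp [ContinuousLinearMap.add_apply, ContinuousLinearMap.smul_apply]
    simp only [smul_eq_mul, e]
    have e2 : a * p x + b * q x = a * (p x - f x) + b * (q x - f x) + (a + b) * f x := by
      ring
    rw [e2, hab]
    linarith
  -- Step D : subgradient inequality for fstar
  have hD : ∀ p q : StrongDual ℝ X, fstar p + (q - p) (gstar p) ≤ fstar q := by
    intro p q
    have := lineDeriv_le_sub_of_convexOn hC (hgstar p (q - p))
    have e : p + (q - p) = q := by abel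
    rw [e] at this
    linarith
  -- Step E : Fenchel equality at (gstar p, p)
  have hE : ∀ p : StrongDual ℝ X, fstar p = p (gstar p) - f (gstar p) := by
    intro p
    refine le_antisymm ?_ (hBge p _)
    have h1 := hD p (g (gstar p))
    rw [hB (gstar p), ContinuousLinearMap.sub_apply] at h1
    linarith
  -- Step F : p is a subgradient of f at gstar p
  have hF : ∀ (p : StrongDual ℝ X) (y : X), f (gstar p) + p (y - gstar p) ≤ f y := by
    intro p y
    have h1 := hBge p y
    have h2 := hE p
    rw [map_sub]
    linarith
  -- Step G : g ∘ gstar = id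
  have hG : ∀ p, g (gstar p) = p := by
    intro p
    ext v
    refine lineDeriv_eq_of_subgrad (hg (gstar p) v) ?_
    intro t
    have := hF p (gstar p + t • v)
    rw [add_sub_cancel_left, map_smul] at this
    simpa [mul_comm] using this
  -- Step H : gstar ∘ g = id
  have hH : ∀ x, gstar (g x) = x := by
    intro x
    rw [NormedSpace.eq_iff_forall_dual_eq ℝ]
    intro q
    refine lineDeriv_eq_of_subgrad (hgstar (g x) q) ?_
    intro t
    have h1 := hBge (g x + t • q) x
    rw [ContinuousLinearMap.add_apply, ContinuousLinearMap.smul_apply, smul_eq_mul] at h1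
    rw [hB x]
    have : q x * t = t * q x := mul_comm _ _
    linarith
  refine ⟨⟨Function.LeftInverse.injective hH, fun p => ⟨gstar p, hG p⟩⟩, hH, hG⟩
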